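/- For σ > 0, the function f(ω) = (1 − e^{−2ωσ})/(2ω²e^{−2ωσ}) on (0,∞) attains its minimum at ω* = (2 + W(−2e^{−2}))/(2σ), where W is the principal branch of the Lambert W function. -/

import Mathlib

open Real

private lemma hasDerivAt_p (t : ℝ) :
    HasDerivAt (fun t => Real.exp t * (t - 2) + 2) (Real.exp t * (t - 1)) t := by
  have h := ((Real.hasDerivAt_exp t).mul ((hasDerivAt_id t).sub_const 2)).add_const 2
  refine h.congr_deriv ?_
  simp only [id_eq]
  ring

private lemma g_min (a : ℝ) (ha1 : 1 < a) (ha2 : a < 2)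
    (hpa : Real.exp a * (a - 2) + 2 = 0) :
    ∀ t : ℝ, 0 < t → (Real.exp a - 1) / a ^ 2 ≤ (Real.exp t - 1) / t ^ 2 := by
  set p : ℝ → ℝ := fun t => Real.exp t * (t - 2) + 2 with hp
  set g : ℝ → ℝ := fun t => (Real.exp t - 1) / t ^ 2 with hg
  have hp0 : p 0 = 0 := by simp [hp]
  have hpa' : p a = 0 := hpa
  have hpanti : StrictAntiOn p (Set.Icc 0 1) := by
    apply strictAntiOn_of_deriv_neg (convex_Icc 0 1)
    · exact ((Real.continuous_exp.mul (by continuity)).add continuous_const).continuousOn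
    · intro x hx
      rw [interior_Icc] at hx
      rw [(hasDerivAt_p x).deriv]
      exact mul_neg_of_pos_of_neg (Real.exp_pos x) (by linarith [hx.2])
  have hpmono : StrictMonoOn p (Set.Ici 1) := by
    apply strictMonoOn_of_deriv_pos (convex_Ici 1)
    · exact ((Real.continuous_exp.mul (by continuity)).add continuous_const).continuousOn
    · intro x hx
      rw [interior_Ici] at hx
      rw [(hasDerivAt_p x).deriv]
      exact mul_pos (Real.exp_pos x) (by linarith [hx.out])
  have hpneg : ∀ x ∈ Set.Ioo (0:ℝ) a, p x < 0 := by
    intro x hx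
    rcases le_or_gt x 1 with h1 | h1
    · have := hpanti (Set.mem_Icc.mpr ⟨le_refl 0, by norm_num⟩)
        (Set.mem_Icc.mpr ⟨le_of_lt hx.1, h1⟩) hx.1
      rw [hp0] at this
      linarith
    · have := hpmono (Set.mem_Ici.mpr (le_of_lt h1)) (Set.mem_Ici.mpr (le_of_lt ha1)) hx.2
      rw [hpa'] at this
      linarith
  have hppos : ∀ x, a < x → 0 < p x := by
    intro x hx
    have := hpmono (Set.mem_Ici.mpr (le_of_lt ha1))
      (Set.mem_Ici.mpr (by linarith)) hx
    rw [hpa'] at this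
    linarith
  have hgd : ∀ t : ℝ, t ≠ 0 → HasDerivAt g (t * p t / t ^ 4) t := by
    intro t ht
    have h := ((Real.hasDerivAt_exp t).sub_const 1).div (hasDerivAt_pow 2 t)
      (pow_ne_zero 2 ht)
    refine h.congr_deriv ?_
    field_simp [hp]
    ring
  have hgcont : ∀ s : Set ℝ, (∀ x ∈ s, x ≠ 0) → ContinuousOn g s := by
    intro s hs
    exact (Real.continuous_exp.sub continuous_const).continuousOn.div
      (continuous_pow 2).continuousOn (fun x hx => pow_ne_zero 2 (hs x hx))
  have hganti : StrictAntiOn g (Set.Ioc 0 a) := by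
    apply strictAntiOn_of_deriv_neg (convex_Ioc 0 a)
    · exact hgcont _ (fun x hx => ne_of_gt hx.1)
    · intro x hx
      rw [interior_Ioc] at hx
      rw [(hgd x (ne_of_gt hx.1)).deriv]
      apply div_neg_of_neg_of_pos
      · exact mul_neg_of_pos_of_neg hx.1 (hpneg x hx)
      · exact pow_pos hx.1 4
  have hgmono : StrictMonoOn g (Set.Ici a) := by
    apply strictMonoOn_of_deriv_pos (convex_Ici a)
    · exact hgcont _ (fun x hx => ne_of_gt (lt_of_lt_of_le (by linarith) hx.out))
    · intro x hx
      rw [interior_Ici] at hx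
      rw [(hgd x (ne_of_gt (by linarith [hx.out]))).deriv]
      apply div_pos
      · exact mul_pos (by linarith [hx.out]) (hppos x hx)
      · exact pow_pos (by linarith [hx.out]) 4
  intro t ht
  rcases lt_trichotomy t a with h | h | h
  · exact le_of_lt (hganti (Set.mem_Ioc.mpr ⟨ht, le_of_lt h⟩)
      (Set.mem_Ioc.mpr ⟨by linarith, le_refl a⟩) h)
  · rw [h]
  · exact le_of_lt (hgmono (Set.mem_Ici.mpr (le_refl a)) (Set.mem_Ici.mpr (le_of_lt h)) h)

/-- Cauchy noise, per-sensor power constraint: the asymptotic variance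
`f(ω) = (1 − e^{−2ωσ})/(2ω²e^{−2ωσ})` on `(0,∞)` attains its minimum at
`ω* = (2 + W(−2e^{−2}))/(2σ)`, where `W` is the principal branch of the Lambert W
function, characterized by `W(x)·e^{W(x)} = x` with `W(x) ≥ −1`. -/
theorem cauchy_asv_min_pspc (σ : ℝ) (hσ : 0 < σ) (w : ℝ)
    (hw : w * Real.exp w = -2 * Real.exp (-2)) (hw1 : -1 ≤ w) :
    ∀ ω : ℝ, 0 < ω →
      (1 - Real.exp (-2 * ((2 + w) / (2 * σ)) * σ)) /
          (2 * ((2 + w) / (2 * σ))^2 * Real.exp (-2 * ((2 + w) / (2 * σ)) * σ)) ≤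
        (1 - Real.exp (-2 * ω * σ)) / (2 * ω^2 * Real.exp (-2 * ω * σ)) := by
  intro ω hω
  have hwne : w ≠ -1 := by
    intro h
    subst h
    have h2 : Real.exp (-2) = Real.exp (-1) * Real.exp (-1) := by
      rw [← Real.exp_add]; norm_num
    have h3 : Real.exp (-1) * Real.exp 1 = 1 := by
      rw [← Real.exp_add]; norm_num
    nlinarith [Real.exp_one_gt_d9, Real.exp_pos (-1)]
  have hw1' : -1 < w := lt_of_le_of_ne hw1 (Ne.symm hwne)
  have hwneg : w < 0 := by
    nlinarith [Real.exp_pos w, Real.exp_pos (-2)]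
  set a : ℝ := 2 + w with ha_def
  have ha1 : 1 < a := by rw [ha_def]; linarith
  have ha2 : a < 2 := by rw [ha_def]; linarith
  have hpa : Real.exp a * (a - 2) + 2 = 0 := by
    have h1 : Real.exp a = Real.exp 2 * Real.exp w := by
      rw [← Real.exp_add]
    have h2 : Real.exp 2 * Real.exp (-2) = 1 := by
      rw [← Real.exp_add]; norm_num
    have h4 : a - 2 = w := by rw [ha_def]; ring
    rw [h4, h1]
    have h3 : Real.exp 2 * Real.exp w * w + 2 = Real.exp 2 * (w * Real.exp w) + 2 := by
      ring
    rw [h3, hw]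
    linear_combination (-2 : ℝ) * h2
  have key := g_min a ha1 ha2 hpa (2 * ω * σ) (by positivity)
  have hσ' : σ ≠ 0 := ne_of_gt hσ
  have ha0 : a ≠ 0 := by positivity
  have e1 : -2 * ((2 + w) / (2 * σ)) * σ = -a := by
    field_simp
    ring
  have e2 : -2 * ω * σ = -(2 * ω * σ) := by ring
  rw [e1, e2, Real.exp_neg, Real.exp_neg]
  have hea : Real.exp a ≠ 0 := Real.exp_ne_zero a
  have het : Real.exp (2 * ω * σ) ≠ 0 := Real.exp_ne_zero _
  have lhs_eq : (1 - (Real.exp a)⁻¹) / (2 * ((2 + w) / (2 * σ))^2 * (Real.exp a)⁻¹)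
      = 2 * σ ^ 2 * ((Real.exp a - 1) / a ^ 2) := by
    rw [show (2:ℝ) + w = a from rfl]
    field_simp
  have rhs_eq : (1 - (Real.exp (2 * ω * σ))⁻¹) / (2 * ω^2 * (Real.exp (2 * ω * σ))⁻¹)
      = 2 * σ ^ 2 * ((Real.exp (2 * ω * σ) - 1) / (2 * ω * σ) ^ 2) := by
    field_simp
  rw [lhs_eq, rhs_eq]
  have h2σ : (0:ℝ) ≤ 2 * σ ^ 2 := by positivity
  exact mul_le_mul_of_nonneg_left key h2σ
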